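/- If P is a collection of pairwise non-crossing (i.e., mutually weakly ordered northwest-southeast) lattice paths contained in a partial staircase L, then the number of distinct paths in P is at most N(L) + 1, the number of critical nodes of L plus one. -/

import Mathlib

open Finset

/-- Pairs `{u<v}` and `{x<y}` (values in `ℕ ∪ {∞}`) are non-nesting if
neither `x<u<v<y` nor `u<x<y<v`. -/
def PairNonNesting (u v x y : WithTop ℕ) : Prop :=
  ¬ (x < u ∧ u < v ∧ v < y) ∧ ¬ (u < x ∧ x < y ∧ y < v)

/-- Pairs `{u<v}` and `{x<y}` are non-crossing if neither `x<u<y<v` nor `u<x<v<y`. -/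
def PairNonCrossing (u v x y : WithTop ℕ) : Prop :=
  ¬ (x < u ∧ u < y ∧ y < v) ∧ ¬ (u < x ∧ x < v ∧ v < y)

/-- Remove one common entry (equal entries in equal positions) from the two lists. -/
def stripOnce (I J : List ℕ) : Option (List ℕ × List ℕ) :=
  ((List.range (min I.length J.length)).find? (fun s => I.getD s 0 == J.getD s 0)).map
    (fun s => (I.eraseIdx s, J.eraseIdx s))

def stripAux : ℕ → List ℕ → List ℕ → List ℕ × List ℕ
  | 0, I, J => (I, J)
  | n+1, I, J =>
    match stripOnce I J with
    | none => (I, J)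
    | some (I', J') => stripAux n I' J'

/-- Repeatedly remove the "common part" (equal entries in equal positions). -/
def strip (I J : List ℕ) : List ℕ × List ℕ := stripAux I.length I J

/-- The `s`-th entry (0-indexed) of the list, viewed in `ℕ ∪ {∞}`, with `∞` beyond the end. -/
def entry (l : List ℕ) (s : ℕ) : WithTop ℕ :=
  (l.map (fun a => (a : WithTop ℕ))).getD s ⊤

/-- Non-nesting condition on sorted lists `I`, `J` with `I` the shorter one:
after removing the common part, all consecutive-difference pairs are non-nesting
(with the `∞` convention for the shorter list). -/
def ListsNonNesting (I J : List ℕ) : Prop :=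
  ∀ s : ℕ, s + 1 < (strip I J).2.length →
    PairNonNesting (entry (strip I J).1 s) (entry (strip I J).1 (s+1))
      (entry (strip I J).2 s) (entry (strip I J).2 (s+1))

def ListsNonCrossing (I J : List ℕ) : Prop :=
  ∀ s : ℕ, s + 1 < (strip I J).2.length →
    PairNonCrossing (entry (strip I J).1 s) (entry (strip I J).1 (s+1))
      (entry (strip I J).2 s) (entry (strip I J).2 (s+1))

/-- The increasing list of elements of a finite set. -/
def sortedList (I : Finset ℕ) : List ℕ := I.sort (· ≤ ·)

/-- Subsets `I`, `J` are non-nesting. -/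
def SetsNonNesting (I J : Finset ℕ) : Prop :=
  if I.card ≤ J.card then ListsNonNesting (sortedList I) (sortedList J)
  else ListsNonNesting (sortedList J) (sortedList I)

/-- Subsets `I`, `J` are non-crossing. -/
def SetsNonCrossing (I J : Finset ℕ) : Prop :=
  if I.card ≤ J.card then ListsNonCrossing (sortedList I) (sortedList J)
  else ListsNonCrossing (sortedList J) (sortedList I)

/-- `A ≺ B`: every element of `A` is smaller than every element of `B`. -/
def Precedes (A B : Finset ℕ) : Prop := ∀ a ∈ A, ∀ b ∈ B, a < b

/-- Leclerc–Zelevinsky weak separation. -/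
def WeaklySeparated (I J : Finset ℕ) : Prop :=
  (J.card ≤ I.card ∧ ∃ J₁ J₂ : Finset ℕ, Disjoint J₁ J₂ ∧ J \ I = J₁ ∪ J₂ ∧
    Precedes J₁ (I \ J) ∧ Precedes (I \ J) J₂) ∨
  (I.card ≤ J.card ∧ ∃ I₁ I₂ : Finset ℕ, Disjoint I₁ I₂ ∧ I \ J = I₁ ∪ I₂ ∧
    Precedes I₁ (J \ I) ∧ Precedes (J \ I) I₂)

/-- Number of north steps of the path `p(I)` among its first `k` steps. -/
def northCount (I : Finset ℕ) (k : ℕ) : ℕ := (I.filter (fun i => i ≤ k)).card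

/-- Paths `p(I)`, `p(J)` are non-crossing: one lies weakly northwest of the other
along their entire length. -/
def PathsNonCrossing (I J : Finset ℕ) : Prop :=
  (∀ k, northCount J k ≤ northCount I k) ∨ (∀ k, northCount I k ≤ northCount J k)

/-- `[k₁, k₂]` (in step coordinates) is a proper common part of the paths `p(I)`, `p(J)`
of length `m`: a maximal shared connected subpath containing neither the source nor an
endpoint.  Maximality is expressed by the two paths separating just before `k₁` and just
after `k₂`. -/
def ProperCommonPart (m : ℕ) (I J : Finset ℕ) (k₁ k₂ : ℕ) : Prop :=
  1 ≤ k₁ ∧ k₁ ≤ k₂ ∧ k₂ < m ∧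
  (∀ k, k₁ ≤ k → k ≤ k₂ → northCount I k = northCount J k) ∧
  northCount I (k₁ - 1) ≠ northCount J (k₁ - 1) ∧
  northCount I (k₂ + 1) ≠ northCount J (k₂ + 1)

/-- Paths `p(I)`, `p(J)` are non-kissing: at every proper common part each path leaves
in the same direction in which it entered (the common part is a crossing, not a kiss). -/
def PathsNonKissing (m : ℕ) (I J : Finset ℕ) : Prop :=
  ∀ k₁ k₂, ProperCommonPart m I J k₁ k₂ → ((k₁ ∈ I) ↔ (k₂ + 1 ∈ I))

/-- Number of north steps among the first `k` steps, for `k ∈ ℤ` (zero for `k ≤ 0`). -/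
def northCountZ (I : Finset ℕ) (k : ℤ) : ℤ := (northCount I k.toNat : ℤ)

/-- The indicator Gelfand–Tsetlin pattern of the path `p(I)`: the cell
`[x,x+1] × [y,y+1]` gets a `1` if it lies southeast of the path and `0` if northwest. -/
noncomputable def Tpat (I : Finset ℕ) (x y : ℤ) : ℝ :=
  if y + 1 ≤ northCountZ I (x + y + 1) then 1 else 0

/-- `(x,y)` is a node of the partial staircase `L ⊆ L_m` with set of sink heights `A`:
it lies (weakly) southwest of some sink `(m-j, j)`, `j ∈ A`. -/
def NodeL (m : ℕ) (A : Finset ℕ) (x y : ℤ) : Prop :=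
  0 ≤ x ∧ 0 ≤ y ∧ ∃ j ∈ A, x + j ≤ m ∧ y ≤ j

/-- Same, with natural-number coordinates. -/
def InL (m : ℕ) (A : Finset ℕ) (x y : ℕ) : Prop :=
  ∃ j ∈ A, x + j ≤ m ∧ y ≤ j

/-- The path `p(I)` is contained in the partial staircase with sink heights `A`. -/
def PathInL (m : ℕ) (A : Finset ℕ) (I : Finset ℕ) : Prop :=
  ∀ k ≤ m, InL m A (k - northCount I k) (northCount I k)

/-- A critical node has edges of `L` leaving it toward both the north and the east. -/
def CriticalNode (m : ℕ) (A : Finset ℕ) (x y : ℕ) : Prop :=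
  InL m A (x + 1) y ∧ InL m A x (y + 1)

open Classical in
/-- `N(L)`: the number of critical nodes of the partial staircase. -/
noncomputable def numCritical (m : ℕ) (A : Finset ℕ) : ℕ :=
  ((Finset.range (m+1) ×ˢ Finset.range (m+1)).filter
    (fun p => CriticalNode m A p.1 p.2)).card

lemma northCount_mono (I : Finset ℕ) {a b : ℕ} (h : a ≤ b) : northCount I a ≤ northCount I b := by
  apply Finset.card_le_card
  intro x hx
  simp only [Finset.mem_filter] at hx ⊢
  exact ⟨hx.1, le_trans hx.2 h⟩

lemma northCount_succ (I : Finset ℕ) (k : ℕ) :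
    northCount I (k+1) = northCount I k + (if k+1 ∈ I then 1 else 0) := by
  unfold northCount
  have hsplit : I.filter (fun i => i ≤ k+1) = I.filter (fun i => i ≤ k) ∪ I.filter (fun i => i = k+1) := by
    rw [← Finset.filter_or]
    apply Finset.filter_congr
    intro a _
    simp [Nat.le_add_one_iff]
  rw [hsplit, Finset.card_union_of_disjoint]
  · congr 1
    rw [Finset.filter_eq']
    split <;> simp
  · rw [Finset.disjoint_left]
    intro a ha hb
    simp only [Finset.mem_filter] at ha hb
    omega

lemma northCount_le_self {m : ℕ} {I : Finset ℕ} (hI : I ⊆ Finset.Icc 1 m) (k : ℕ) :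
    northCount I k ≤ k := by
  unfold northCount
  calc (I.filter (fun i => i ≤ k)).card ≤ (Finset.Icc 1 k).card := by
        apply Finset.card_le_card
        intro x hx
        simp only [Finset.mem_filter] at hx
        have := Finset.mem_Icc.mp (hI hx.1)
        exact Finset.mem_Icc.mpr ⟨this.1, hx.2⟩
    _ = k := by rw [Nat.card_Icc]; omega

lemma northCount_stable {m : ℕ} {I : Finset ℕ} (hI : I ⊆ Finset.Icc 1 m) {k : ℕ} (h : m ≤ k) :
    northCount I k = I.card := by
  unfold northCount
  congr 1
  apply Finset.filter_true_of_mem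
  intro x hx
  exact le_trans (Finset.mem_Icc.mp (hI hx)).2 h

lemma eq_of_nc {m : ℕ} {I J : Finset ℕ} (hI : I ⊆ Finset.Icc 1 m) (hJ : J ⊆ Finset.Icc 1 m)
    (h : ∀ k, northCount I k = northCount J k) : I = J := by
  ext i
  match i with
  | 0 =>
    constructor <;> intro hm
    · exact absurd (Finset.mem_Icc.mp (hI hm)).1 (by omega)
    · exact absurd (Finset.mem_Icc.mp (hJ hm)).1 (by omega)
  | j+1 =>
    have h1 := northCount_succ I j
    have h2 := northCount_succ J j
    have e1 := h (j+1)
    have e2 := h j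
    by_cases hI' : j+1 ∈ I <;> by_cases hJ' : j+1 ∈ J <;>
      simp only [hI', hJ', if_true, if_false] at h1 h2 <;> simp only [hI', hJ'] <;> omega

lemma exists_rel_min {α : Type*} [DecidableEq α] (r : α → α → Prop)
    (htrans : ∀ a b c, r a b → r b c → r a c) :
    ∀ (S : Finset α), S.Nonempty → (∀ a ∈ S, ∀ b ∈ S, r a b ∨ r b a) →
      ∃ M ∈ S, ∀ a ∈ S, r M a := by
  intro S
  induction S using Finset.induction_on with
  | empty => intro h; simp at h
  | @insert a s ha ih =>
    intro _ htot
    rcases s.eq_empty_or_nonempty with rfl | hs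
    · refine ⟨a, by simp, ?_⟩
      intro b hb
      rcases Finset.mem_insert.mp hb with rfl | hb
      · rcases htot b (by simp) b (by simp) with h | h <;> exact h
      · exact absurd hb (by simp)
    · obtain ⟨M, hM, hMmin⟩ := ih hs
        (fun x hx y hy => htot x (Finset.mem_insert_of_mem hx) y (Finset.mem_insert_of_mem hy))
      rcases htot a (Finset.mem_insert_self a s) M (Finset.mem_insert_of_mem hM) with h | h
      · refine ⟨a, Finset.mem_insert_self a s, ?_⟩
        intro b hb
        rcases Finset.mem_insert.mp hb with rfl | hb
        · rcases htot b (Finset.mem_insert_self b s) b (Finset.mem_insert_self b s) with h' | h' <;> exact h'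
        · exact htrans a M b h (hMmin b hb)
      · refine ⟨M, Finset.mem_insert_of_mem hM, ?_⟩
        intro b hb
        rcases Finset.mem_insert.mp hb with rfl | hb
        · exact h
        · exact hMmin b hb

lemma pair_facts (m : ℕ) (A : Finset ℕ) (I J : Finset ℕ)
    (hI : I ⊆ Finset.Icc 1 m) (hJ : J ⊆ Finset.Icc 1 m)
    (hIL : PathInL m A I) (hJL : PathInL m A J)
    (hle : ∀ k, northCount I k ≤ northCount J k) (hne : I ≠ J) :
    ∃ k y, 1 ≤ k ∧ k ≤ m ∧ y + 1 ≤ k ∧ northCount I k = y ∧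
      northCount J k = y + 1 ∧ CriticalNode m A (k - 1 - y) y := by
  have hex : ∃ k, northCount I k < northCount J k := by
    by_contra h
    push_neg at h
    exact hne (eq_of_nc hI hJ (fun k => le_antisymm (hle k) (h k)))
  set k₀ := Nat.find hex with hk₀def
  have hspec : northCount I k₀ < northCount J k₀ := Nat.find_spec hex
  have hmin : ∀ k < k₀, northCount I k = northCount J k :=
    fun k hk => le_antisymm (hle k) (not_lt.mp (Nat.find_min hex hk))
  have h1 : 1 ≤ k₀ := by
    rcases Nat.eq_zero_or_pos k₀ with h0 | h0
    · exfalso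
      rw [h0] at hspec
      have := northCount_le_self hI 0
      have := northCount_le_self hJ 0
      omega
    · exact h0
  have hm : k₀ ≤ m := by
    by_contra h
    push_neg at h
    have e1 := northCount_stable hI (le_of_lt h)
    have e2 := northCount_stable hJ (le_of_lt h)
    have e3 := northCount_stable hI (le_refl m)
    have e4 := northCount_stable hJ (le_refl m)
    have := hmin m h
    omega
  set y := northCount I (k₀ - 1) with hydef
  have hy2 : northCount J (k₀ - 1) = y := (hmin _ (by omega)).symm
  have hsucc := northCount_succ J (k₀ - 1)
  have hk0e : k₀ - 1 + 1 = k₀ := by omega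
  rw [hk0e, hy2] at hsucc
  have hJle : northCount J k₀ ≤ y + 1 := by rw [hsucc]; split <;> omega
  have hImono : y ≤ northCount I k₀ := northCount_mono I (Nat.sub_le k₀ 1)
  have hIk : northCount I k₀ = y := by omega
  have hJk : northCount J k₀ = y + 1 := by omega
  have hyk : y + 1 ≤ k₀ := by
    have := northCount_le_self hI (k₀ - 1)
    omega
  refine ⟨k₀, y, h1, hm, hyk, hIk, hJk, ?_, ?_⟩
  · have hIL' := hIL k₀ hm
    rw [hIk] at hIL'
    have e : k₀ - 1 - y + 1 = k₀ - y := by omega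
    rw [e]
    exact hIL'
  · have hJL' := hJL k₀ hm
    rw [hJk] at hJL'
    have e : k₀ - 1 - y = k₀ - (y + 1) := by omega
    rw [e]
    exact hJL'

/-- If `P` is a collection of pairwise non-crossing lattice paths contained in a partial
staircase `L`, then the number of distinct paths in `P` is at most `N(L) + 1`, the number
of critical nodes of `L` plus one. -/
theorem nonCrossing_card_le (m : ℕ) (A : Finset ℕ) (hA : A ⊆ Finset.range (m+1))
    (P : Finset (Finset ℕ))
    (hP : ∀ I ∈ P, I ⊆ Finset.Icc 1 m ∧ PathInL m A I)
    (hnc : ∀ I ∈ P, ∀ J ∈ P, PathsNonCrossing I J) :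
    P.card ≤ numCritical m A + 1 := by
    classical
  rcases P.eq_empty_or_nonempty with rfl | hPne
  · simp
  have htot : ∀ I ∈ P, ∀ J ∈ P,
      (∀ k, northCount I k ≤ northCount J k) ∨ (∀ k, northCount J k ≤ northCount I k) := by
    intro I hI J hJ
    rcases hnc I hI J hJ with h | h
    · exact Or.inr h
    · exact Or.inl h
  obtain ⟨M, hMP, hMtop⟩ := exists_rel_min
    (fun I J : Finset ℕ => ∀ k, northCount J k ≤ northCount I k)
    (fun a b c h1 h2 k => le_trans (h2 k) (h1 k)) P hPne
    (fun a ha b hb => htot b hb a ha)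
  set Pn := P.erase M with hPndef
  have key : ∀ I ∈ Pn, ∃ k y, 1 ≤ k ∧ k ≤ m ∧ y + 1 ≤ k ∧ northCount I k = y ∧
      CriticalNode m A (k - 1 - y) y ∧
      ∃ J, (∀ J' ∈ P, (∀ k', northCount I k' ≤ northCount J' k') → I ≠ J' →
              ∀ k', northCount J k' ≤ northCount J' k') ∧ northCount J k = y + 1 := by
    intro I hIPn
    obtain ⟨hIne, hIP⟩ := Finset.mem_erase.mp hIPn
    set S := P.filter (fun J => (∀ k, northCount I k ≤ northCount J k) ∧ I ≠ J) with hSdef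
    have hMS : M ∈ S := Finset.mem_filter.mpr ⟨hMP, hMtop I hIP, hIne⟩
    obtain ⟨J, hJS, hJmin⟩ := exists_rel_min
      (fun X Y : Finset ℕ => ∀ k, northCount X k ≤ northCount Y k)
      (fun a b c h1 h2 k => le_trans (h1 k) (h2 k)) S ⟨M, hMS⟩
      (fun a ha b hb => htot a (Finset.mem_of_mem_filter a ha) b (Finset.mem_of_mem_filter b hb))
    obtain ⟨hJP, hIJle, hIJne⟩ := Finset.mem_filter.mp hJS
    obtain ⟨k, y, h1, h2, h3, h4, h5, h6⟩ := pair_facts m A I J (hP I hIP).1 (hP J hJP).1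
      (hP I hIP).2 (hP J hJP).2 hIJle hIJne
    exact ⟨k, y, h1, h2, h3, h4, h6, J,
      fun J' hJ' hle' hne' => hJmin J' (Finset.mem_filter.mpr ⟨hJ', hle', hne'⟩), h5⟩
  choose kf yf hk1 hk2 hk3 hIk hcrit Jf hJmin hJk using key
  set g : Finset ℕ → ℕ × ℕ := fun I =>
    if h : I ∈ Pn then (kf I h - 1 - yf I h, yf I h) else (0, 0) with hgdef
  have hmain : Pn.card ≤ numCritical m A := by
    unfold numCritical
    apply Finset.card_le_card_of_injOn g
    · intro I hI
      simp only [hgdef, dif_pos (Finset.mem_coe.mp hI)]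
      refine Finset.mem_filter.mpr ⟨Finset.mem_product.mpr ⟨?_, ?_⟩, ?_⟩
      · exact Finset.mem_range.mpr (by have := hk2 I hI; omega)
      · exact Finset.mem_range.mpr (by have h2 := hk2 I hI; have h3 := hk3 I hI; omega)
      · exact hcrit I hI
    · have hsym : ∀ X (hX : X ∈ Pn) Y (hY : Y ∈ Pn), X ≠ Y →
          (∀ k, northCount X k ≤ northCount Y k) → g X = g Y → False := by
        intro X hX Y hY hXY hle hgXY
        simp only [hgdef, dif_pos hX, dif_pos hY, Prod.mk.injEq] at hgXY
        obtain ⟨hxy1, hy⟩ := hgXY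
        have hk3X := hk3 X hX
        have hk3Y := hk3 Y hY
        have hk : kf X hX = kf Y hY := by omega
        have hYP : Y ∈ P := (Finset.mem_erase.mp hY).2
        have hmin' := hJmin X hX Y hYP hle hXY (kf X hX)
        have hJ1 := hJk X hX
        have hI2 := hIk Y hY
        rw [hk] at hmin' hJ1
        omega
      intro I hI I' hI' hgeq
      simp only [Finset.mem_coe] at hI hI'
      by_contra hne
      rcases htot I (Finset.mem_erase.mp hI).2 I' (Finset.mem_erase.mp hI').2 with h | h
      · exact hsym I hI I' hI' hne h hgeq
      · exact hsym I' hI' I hI (Ne.symm hne) h hgeq.symm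
  have hPcard : P.card = Pn.card + 1 := by
    rw [hPndef, Finset.card_erase_of_mem hMP]
    have := Finset.card_pos.mpr hPne
    omega
  omega
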